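/- Let a > 0, q > 0 and c ≥ q/4 be real numbers, and set T = 3/(q - 6c). Define f, k : ℝ → ℝ by f(t) = a·(((6c - q)/3)·t + 1)^{q/(2q - 12c)} and k(t) = (1/c)·((a/f(t))^{6c/q} - 1). Then (f, k) solves the coupled system of ordinary differential equations f′(t) = -(q/6)·(a²/f(t))·(1/(1 + c·k(t)))², k′(t) = (a²/f(t)²)·(1/(1 + c·k(t))) for every t ∈ (T, +∞), with initial conditions f(0) = a and k(0) = 0. -/

import Mathlib

/-- The pair `(f, k)` from the proof of Theorem 5.4 of the paper solves the
coupled system `f' = -(q/6) (a²/f) (1 + c k)⁻²`, `k' = (a²/f²) (1 + c k)⁻¹`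
on `(T, ∞)`, with initial conditions `f 0 = a`, `k 0 = 0`. -/
theorem stmt_4 (a q c : ℝ) (ha : 0 < a) (hq : 0 < q) (hc : q / 4 ≤ c)
    (T : ℝ) (hT : T = 3 / (q - 6 * c)) (f k : ℝ → ℝ)
    (hf : ∀ t : ℝ, f t = a * ((6 * c - q) / 3 * t + 1) ^ (q / (2 * q - 12 * c)))
    (hk : ∀ t : ℝ, k t = (1 / c) * ((a / f t) ^ (6 * c / q) - 1)) :
    f 0 = a ∧ k 0 = 0 ∧
    ∀ t ∈ Set.Ioi T,
      HasDerivAt f (-(q / 6) * (a ^ 2 / f t) * (1 / (1 + c * k t)) ^ 2) t ∧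
      HasDerivAt k (a ^ 2 / (f t) ^ 2 * (1 / (1 + c * k t))) t := by
  have hc0 : 0 < c := lt_of_lt_of_le (by linarith) hc
  set m : ℝ := (6 * c - q) / 3 with hmdef
  have hm : 0 < m := by rw [hmdef]; linarith
  have hden : 2 * q - 12 * c < 0 := by linarith
  set p : ℝ := q / (2 * q - 12 * c) with hpdef
  have hp : p = -(q / (6 * m)) := by
    rw [hpdef, hmdef, show (6:ℝ) * ((6 * c - q) / 3) = -(2 * q - 12 * c) by ring,
      div_neg, neg_neg]
  have hf0 : f 0 = a := by
    rw [hf 0]; norm_num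
  have hk0 : k 0 = 0 := by
    rw [hk 0, hf0, div_self ha.ne', Real.one_rpow]; ring
  refine ⟨hf0, hk0, ?_⟩
  -- positivity of m*s+1 on Ioi T
  have hTval : T = -(1 / m) := by
    rw [hT, hmdef, one_div_div, show q - 6 * c = -(6 * c - q) by ring, div_neg]
  have hxpos : ∀ s ∈ Set.Ioi T, 0 < m * s + 1 := by
    intro s hs
    rw [Set.mem_Ioi, hTval] at hs
    have h1 : m * -(1 / m) < m * s := mul_lt_mul_of_pos_left hs hm
    have h2 : m * -(1 / m) = -1 := by field_simp
    linarith
  -- key: 1 + c * k s = (m*s+1) ^ (c/m)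
  have hck : ∀ s ∈ Set.Ioi T, 1 + c * k s = (m * s + 1) ^ (c / m) := by
    intro s hs
    have hx := hxpos s hs
    have h1 : a / f s = (m * s + 1) ^ (-p) := by
      rw [hf s, div_mul_eq_div_div, div_self ha.ne',
        Real.rpow_neg hx.le, one_div]
    have h2 : (a / f s) ^ (6 * c / q) = (m * s + 1) ^ (c / m) := by
      rw [h1, ← Real.rpow_mul hx.le]
      congr 1
      rw [hp]; field_simp
    rw [hk s, h2]; field_simp; ring
  intro t ht
  have hx := hxpos t ht
  set x : ℝ := m * t + 1 with hxdef
  -- derivative of inner function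
  have hinner : HasDerivAt (fun s : ℝ => m * s + 1) m t := by
    simpa using ((hasDerivAt_id t).const_mul m).add_const 1
  constructor
  · -- derivative of f
    have hfun : f = fun s : ℝ => a * (m * s + 1) ^ p := funext fun s => hf s
    have hd : HasDerivAt (fun s : ℝ => a * (m * s + 1) ^ p)
        (a * (m * p * x ^ (p - 1))) t :=
      (hinner.rpow_const (Or.inl hx.ne')).const_mul a
    rw [hfun]
    convert hd using 1
    rw [← hfun, hck t ht, hf t]
    rw [div_pow, one_pow, ← Real.rpow_natCast (x ^ (c / m)) 2,
      ← Real.rpow_mul hx.le]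
    rw [sq a, mul_div_assoc, div_mul_cancel_left₀ ha.ne',
      ← Real.rpow_neg hx.le, one_div, ← Real.rpow_neg hx.le]
    have hxadd : x ^ (-p) * x ^ (-(c / m * (2:ℕ))) = x ^ (p - 1) := by
      rw [← Real.rpow_add hx]
      congr 1
      rw [hp]; field_simp; ring
    have hmp : m * p = -(q / 6) := by rw [hp]; field_simp
    rw [show -(q / 6) * (a * x ^ (-p)) * x ^ (-(c / m * (2:ℕ))) =
        a * (-(q / 6) * (x ^ (-p) * x ^ (-(c / m * (2:ℕ))))) from by push_cast; ring,
      hxadd, hmp]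
  · -- derivative of k
    set g : ℝ → ℝ := fun s => (1 / c) * ((m * s + 1) ^ (c / m) - 1) with hgdef
    have hgeq : Set.EqOn k g (Set.Ioi T) := by
      intro s hs
      have h := hck s hs
      have h2 : c * k s = (m * s + 1) ^ (c / m) - 1 := by linarith
      rw [hgdef]; simp only []
      rw [← h2]; field_simp
    have hdg : HasDerivAt g ((1 / c) * (m * (c / m) * x ^ (c / m - 1))) t :=
      ((hinner.rpow_const (Or.inl hx.ne')).sub_const 1).const_mul (1 / c)
    have hev : k =ᶠ[nhds t] g :=
      Filter.eventuallyEq_of_mem (isOpen_Ioi.mem_nhds ht) hgeq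
    have hd : HasDerivAt k ((1 / c) * (m * (c / m) * x ^ (c / m - 1))) t :=
      hdg.congr_of_eventuallyEq hev
    convert hd using 1
    rw [hck t ht, hf t, mul_pow, ← Real.rpow_natCast ((m * t + 1) ^ p) 2,
      ← Real.rpow_mul hx.le, div_mul_eq_div_div, div_self (by positivity : a ^ 2 ≠ 0),
      one_div, ← Real.rpow_neg hx.le, one_div, ← Real.rpow_neg hx.le]
    have hxadd : x ^ (-(p * (2:ℕ))) * x ^ (-(c / m)) = x ^ (c / m - 1) := by
      rw [← Real.rpow_add hx]
      congr 1
      rw [hp]; field_simp; ring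
    have hco : (1 / c) * (m * (c / m)) = 1 := by field_simp
    calc x ^ (-(p * (2:ℕ))) * x ^ (-(c / m)) = x ^ (c / m - 1) := hxadd
      _ = (1 / c) * (m * (c / m) * x ^ (c / m - 1)) := by
          rw [← mul_assoc, hco, one_mul]
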